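/- Let d ≥ 2, 0 < R0 < R1, let χ be an admissible transition function for (R0, R1), and set c_χ := sup_{r>0} r χ′(r). Let q, μ > 0 with q + μ ≤ 2, let U ⊆ ℝ^d be a bounded measurable set, and let v : ℝ^d → ℂ be continuously differentiable. Then ∫_U [ 2|∂_d v|² (1 − χ(r)) + (2−q)|∇v|² χ(r) + 2 r |∂_r v|² χ′(r) ] dx − 2 Re ∫_U x_d ∂_r v conj(∂_d v) χ′(r) dx ≥ (2 − q − μ − c_χ/2) ∫_U |∂_d v|² dx + μ ∫_U |∇v|² χ(r) dx, where r := |x| and the integrands involving ∂_r v are interpreted as 0 at x = 0 (this is consistent since χ′(|x|) = 0 for |x| ≤ R0). -/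

import Mathlib

open MeasureTheory
open scoped BigOperators ComplexConjugate Classical

noncomputable section

/-- `χ : ℝ → ℝ` is an *admissible transition function* for `(R0, R1)`. -/
structure IsAdmissibleTransition (R0 R1 : ℝ) (χ : ℝ → ℝ) : Prop where
  contDiffOn : ContDiffOn ℝ 3 χ (Set.Ici 0)
  eq_zero : ∀ r, 0 ≤ r → r ≤ R0 → χ r = 0
  eq_one : ∀ r, R1 ≤ r → χ r = 1
  mem_Ioo : ∀ r, R0 < r → r < R1 → χ r ∈ Set.Ioo (0 : ℝ) 1
  deriv_nonneg : ∀ r : ℝ, 0 < r → 0 ≤ r * deriv χ r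
  deriv_lt_four : ∀ r : ℝ, 0 < r → r * deriv χ r < 4

/-- Partial derivative of a complex-valued function in the `i`-th coordinate direction. -/
def cpd (d : ℕ) (f : EuclideanSpace ℝ (Fin d) → ℂ) (i : Fin d)
    (x : EuclideanSpace ℝ (Fin d)) : ℂ :=
  fderiv ℝ f x (EuclideanSpace.single i 1)

/-- `|∇f|² = Σ_j |∂_j f|²`. -/
def gradsq (d : ℕ) (f : EuclideanSpace ℝ (Fin d) → ℂ) (x : EuclideanSpace ℝ (Fin d)) : ℝ :=
  ∑ i, ‖cpd d f i x‖ ^ 2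

/-- The radial derivative `∂_r v(x) = x·∇v(x)/|x|`, interpreted as `0` at `x = 0`. -/
def rder (d : ℕ) (f : EuclideanSpace ℝ (Fin d) → ℂ) (x : EuclideanSpace ℝ (Fin d)) : ℂ :=
  if x = 0 then 0 else (∑ i, ((x i : ℝ) : ℂ) * cpd d f i x) / ((‖x‖ : ℝ) : ℂ)

/-- `c_χ := sup_{r > 0} r χ′(r)`. -/
def cchi (χ : ℝ → ℝ) : ℝ :=
  sSup ((fun r => r * deriv χ r) '' Set.Ioi (0 : ℝ))

private lemma coord_abs_le_norm {d : ℕ} (x : EuclideanSpace ℝ (Fin d)) (i : Fin d) :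
    |x i| ≤ ‖x‖ := by
  rw [EuclideanSpace.norm_eq, ← Real.sqrt_sq_eq_abs]
  apply Real.sqrt_le_sqrt
  have := Finset.single_le_sum (f := fun k => ‖x k‖ ^ 2) (fun k _ => sq_nonneg _)
    (Finset.mem_univ i)
  simpa [sq_abs] using this

set_option maxHeartbeats 1000000 in
private lemma transition_aux (d : ℕ) (R0 R1 : ℝ) (hR0 : 0 < R0)
    (hR01 : R0 < R1) (χ : ℝ → ℝ) (hχ : IsAdmissibleTransition R0 R1 χ)
    (q μ : ℝ) (hq : 0 < q) (hμ : 0 < μ) (hqμ : q + μ ≤ 2)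
    (U : Set (EuclideanSpace ℝ (Fin d))) (hUm : MeasurableSet U)
    (hUb : Bornology.IsBounded U)
    (v : EuclideanSpace ℝ (Fin d) → ℂ) (hv : ContDiff ℝ 1 v) (j : Fin d) :
    (∫ x in U,
        (2 * ‖cpd d v j x‖ ^ 2 * (1 - χ ‖x‖)
          + (2 - q) * gradsq d v x * χ ‖x‖
          + 2 * ‖x‖ * ‖rder d v x‖ ^ 2 * deriv χ ‖x‖))
      - 2 * (∫ x in U,
          ((x j : ℝ) : ℂ) * rder d v x
            * conj (cpd d v j x) * ((deriv χ ‖x‖ : ℝ) : ℂ)).re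
      ≥ (2 - q - μ - cchi χ / 2) * (∫ x in U, ‖cpd d v j x‖ ^ 2)
        + μ * ∫ x in U, gradsq d v x * χ ‖x‖ := by
  -- basic facts about χ
  have hχ01 : ∀ r : ℝ, 0 ≤ r → 0 ≤ χ r ∧ χ r ≤ 1 := by
    intro r hr
    rcases le_or_gt r R0 with h | h
    · rw [hχ.eq_zero r hr h]; norm_num
    rcases lt_or_ge r R1 with h1 | h1
    · exact ⟨(hχ.mem_Ioo r h h1).1.le, (hχ.mem_Ioo r h h1).2.le⟩
    · rw [hχ.eq_one r h1]; norm_num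
  have hdz : ∀ r : ℝ, 0 < r → r < R0 → deriv χ r = 0 := by
    intro r hr hr0
    have h : χ =ᶠ[nhds r] fun _ => (0 : ℝ) := by
      filter_upwards [Ioo_mem_nhds hr hr0] with y hy
      exact hχ.eq_zero y hy.1.le hy.2.le
    rw [h.deriv_eq]; simp
  have hdnn : ∀ r : ℝ, 0 < r → 0 ≤ deriv χ r := by
    intro r hr
    nlinarith [hχ.deriv_nonneg r hr]
  -- facts about cchi
  have hSbdd : BddAbove ((fun r => r * deriv χ r) '' Set.Ioi (0 : ℝ)) := by
    refine ⟨4, ?_⟩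
    rintro y ⟨r, hr, rfl⟩
    exact (hχ.deriv_lt_four r hr).le
  have hcub : ∀ r : ℝ, 0 < r → r * deriv χ r ≤ cchi χ := fun r hr =>
    le_csSup hSbdd ⟨r, hr, rfl⟩
  have hc0 : 0 ≤ cchi χ := le_trans (hχ.deriv_nonneg 1 one_pos) (hcub 1 one_pos)
  -- continuity and measurability facts
  have hF : Continuous (fderiv ℝ v) := hv.continuous_fderiv one_ne_zero
  have hcpd : ∀ i, Continuous (cpd d v i) := fun i => hF.clm_apply continuous_const
  have hgs : Continuous (gradsq d v) :=
    continuous_finset_sum _ fun i _ => ((hcpd i).norm.pow 2)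
  have hχc : Continuous fun x : EuclideanSpace ℝ (Fin d) => χ ‖x‖ :=
    (hχ.contDiffOn.continuousOn.comp_continuous continuous_norm
      fun x => Set.mem_Ici.2 (norm_nonneg x))
  have hcoord : ∀ i : Fin d, Continuous fun x : EuclideanSpace ℝ (Fin d) => x i :=
    fun i => (EuclideanSpace.proj i).continuous
  have hrm : Measurable (rder d v) := by
    unfold rder
    refine Measurable.ite (measurableSet_eq) measurable_const ?_
    apply Measurable.div
    · exact Finset.measurable_sum _ fun i _ =>
        ((Complex.continuous_ofReal.comp (hcoord i)).measurable).mul (hcpd i).measurable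
    · exact (Complex.continuous_ofReal.comp continuous_norm).measurable
  have hdm : Measurable fun x : EuclideanSpace ℝ (Fin d) => deriv χ ‖x‖ :=
    (measurable_deriv χ).comp measurable_norm
  -- bounds
  obtain ⟨Rb0, hRb0⟩ := hUb.subset_closedBall 0
  set Rb : ℝ := max Rb0 0 with hRbdef
  have hRbnn : 0 ≤ Rb := le_max_right _ _
  have hxRb : ∀ x ∈ U, ‖x‖ ≤ Rb := by
    intro x hx
    have := hRb0 hx
    rw [Metric.mem_closedBall, dist_zero_right] at this
    exact this.trans (le_max_left _ _)
  obtain ⟨C0, hC0⟩ := (isCompact_closedBall (0 : EuclideanSpace ℝ (Fin d))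
    Rb0).exists_bound_of_continuousOn hF.continuousOn
  set C : ℝ := max C0 0 with hCdef
  have hCnn : 0 ≤ C := le_max_right _ _
  have hbcpd : ∀ i, ∀ x ∈ U, ‖cpd d v i x‖ ≤ C := by
    intro i x hx
    calc ‖cpd d v i x‖ ≤ ‖fderiv ℝ v x‖ * ‖EuclideanSpace.single i (1 : ℝ)‖ :=
          (fderiv ℝ v x).le_opNorm _
      _ = ‖fderiv ℝ v x‖ := by rw [EuclideanSpace.norm_single]; simp
      _ ≤ C := le_trans (hC0 x (hRb0 hx)) (le_max_left _ _)
  have hgbd : ∀ x ∈ U, gradsq d v x ≤ d * C ^ 2 := by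
    intro x hx
    have : gradsq d v x ≤ ∑ _i : Fin d, C ^ 2 :=
      Finset.sum_le_sum fun i _ => pow_le_pow_left₀ (norm_nonneg _) (hbcpd i x hx) 2
    simpa using this
  have hgnn : ∀ x, 0 ≤ gradsq d v x := fun x =>
    Finset.sum_nonneg fun i _ => sq_nonneg _
  have hcpd_sq_le : ∀ x, ‖cpd d v j x‖ ^ 2 ≤ gradsq d v x := fun x =>
    Finset.single_le_sum (f := fun i => ‖cpd d v i x‖ ^ 2) (fun i _ => sq_nonneg _)
      (Finset.mem_univ j)
  have hrder_le : ∀ x, ‖rder d v x‖ ≤ d * (‖fderiv ℝ v x‖ ⊔ 0) := by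
    intro x
    by_cases hx0 : x = 0
    · simp [rder, hx0]; positivity
    · rw [rder, if_neg hx0, norm_div]
      have hnx : (0 : ℝ) < ‖x‖ := norm_pos_iff.2 hx0
      have hnum : ‖∑ i, ((x i : ℝ) : ℂ) * cpd d v i x‖
          ≤ ∑ _i : Fin d, ‖x‖ * (‖fderiv ℝ v x‖ ⊔ 0) := by
        refine (norm_sum_le _ _).trans (Finset.sum_le_sum fun i _ => ?_)
        rw [norm_mul, Complex.norm_real, Real.norm_eq_abs]
        refine mul_le_mul (coord_abs_le_norm x i) ?_ (norm_nonneg _) (norm_nonneg x)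
        calc ‖cpd d v i x‖ ≤ ‖fderiv ℝ v x‖ * ‖EuclideanSpace.single i (1 : ℝ)‖ :=
              (fderiv ℝ v x).le_opNorm _
          _ = ‖fderiv ℝ v x‖ := by rw [EuclideanSpace.norm_single]; simp
          _ ≤ _ := le_max_left _ _
      rw [Complex.norm_real, Real.norm_eq_abs, abs_of_pos hnx, div_le_iff₀ hnx]
      calc ‖∑ i, ((x i : ℝ) : ℂ) * cpd d v i x‖ ≤ ∑ _i : Fin d, ‖x‖ * (‖fderiv ℝ v x‖ ⊔ 0) :=
            hnum
        _ = d * (‖fderiv ℝ v x‖ ⊔ 0) * ‖x‖ := by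
            simp [Finset.sum_const]; ring
  have hrbd : ∀ x ∈ U, ‖rder d v x‖ ≤ d * C := by
    intro x hx
    refine (hrder_le x).trans ?_
    have h1 : ‖fderiv ℝ v x‖ ⊔ 0 ≤ C :=
      max_le (le_trans (hC0 x (hRb0 hx)) (le_max_left _ _)) hCnn
    exact mul_le_mul_of_nonneg_left h1 (Nat.cast_nonneg d)
  set K : ℝ := max (|deriv χ 0|) (4 / R0) with hKdef
  have hKnn : 0 ≤ K := le_trans (abs_nonneg _) (le_max_left _ _)
  have hKb : ∀ x : EuclideanSpace ℝ (Fin d), |deriv χ ‖x‖| ≤ K := by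
    intro x
    rcases eq_or_lt_of_le (norm_nonneg x) with h | h
    · rw [← h]; exact le_max_left _ _
    rcases lt_or_ge ‖x‖ R0 with h0 | h0
    · rw [hdz _ h h0]; simpa using hKnn
    · have h4 := hχ.deriv_lt_four ‖x‖ h
      have hnn := hdnn ‖x‖ h
      rw [abs_of_nonneg hnn]
      refine le_trans ?_ (le_max_right _ _)
      rw [le_div_iff₀ hR0]
      nlinarith
  -- abbreviations for the four integrands
  set f1 : EuclideanSpace ℝ (Fin d) → ℝ := fun x =>
    2 * ‖cpd d v j x‖ ^ 2 * (1 - χ ‖x‖)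
      + (2 - q) * gradsq d v x * χ ‖x‖
      + 2 * ‖x‖ * ‖rder d v x‖ ^ 2 * deriv χ ‖x‖ with hf1def
  set f2 : EuclideanSpace ℝ (Fin d) → ℂ := fun x =>
    ((x j : ℝ) : ℂ) * rder d v x * conj (cpd d v j x) * ((deriv χ ‖x‖ : ℝ) : ℂ) with hf2def
  set g1 : EuclideanSpace ℝ (Fin d) → ℝ := fun x => ‖cpd d v j x‖ ^ 2 with hg1def
  set g2 : EuclideanSpace ℝ (Fin d) → ℝ := fun x => gradsq d v x * χ ‖x‖ with hg2def
  have hUfin : volume U ≠ ⊤ := hUb.measure_lt_top.ne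
  -- measurability
  have hm1 : AEStronglyMeasurable f1 volume := by
    refine Measurable.aestronglyMeasurable ?_
    refine Measurable.add (Measurable.add ?_ ?_) ?_
    · exact ((continuous_const.mul ((hcpd j).norm.pow 2)).mul
        (continuous_const.sub hχc)).measurable
    · exact ((continuous_const.mul hgs).mul hχc).measurable
    · exact ((continuous_norm.measurable.const_mul 2).mul
        ((hrm.norm.pow_const 2))).mul hdm
  have hm2 : AEStronglyMeasurable f2 volume := by
    refine Measurable.aestronglyMeasurable ?_
    exact (((Complex.measurable_ofReal.comp (hcoord j).measurable).mul hrm).mul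
        ((continuous_star.comp (hcpd j)).measurable)).mul
      (Complex.measurable_ofReal.comp hdm)
  have hm3 : AEStronglyMeasurable g1 volume := ((hcpd j).norm.pow 2).aestronglyMeasurable
  have hm4 : AEStronglyMeasurable g2 volume := (hgs.mul hχc).aestronglyMeasurable
  -- integrability
  have hif1 : IntegrableOn f1 U volume := by
    refine Measure.integrableOn_of_bounded hUfin hm1
      (M := 2 * C ^ 2 + 2 * (d * C ^ 2) + 2 * Rb * (d * C) ^ 2 * K)
      (ae_restrict_of_forall_mem hUm fun x hx => ?_)
    have hb := hbcpd j x hx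
    have ht := hχ01 ‖x‖ (norm_nonneg x)
    have hb2 : ‖cpd d v j x‖ ^ 2 ≤ C ^ 2 := pow_le_pow_left₀ (norm_nonneg _) hb 2
    have ha2 : ‖rder d v x‖ ^ 2 ≤ (d * C) ^ 2 := pow_le_pow_left₀ (norm_nonneg _) (hrbd x hx) 2
    have h1 : |2 * ‖cpd d v j x‖ ^ 2 * (1 - χ ‖x‖)| ≤ 2 * C ^ 2 := by
      have h1t : |1 - χ ‖x‖| ≤ 1 := by rw [abs_le]; constructor <;> linarith [ht.1, ht.2]
      rw [abs_mul, abs_of_nonneg (show (0:ℝ) ≤ 2 * ‖cpd d v j x‖ ^ 2 by positivity)]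
      calc 2 * ‖cpd d v j x‖ ^ 2 * |1 - χ ‖x‖| ≤ 2 * C ^ 2 * 1 :=
            mul_le_mul (by linarith) h1t (abs_nonneg _) (by positivity)
        _ = 2 * C ^ 2 := mul_one _
    have h2 : |(2 - q) * gradsq d v x * χ ‖x‖| ≤ 2 * (d * C ^ 2) := by
      have hq2 : q < 2 := by linarith
      rw [abs_of_nonneg (mul_nonneg (mul_nonneg (by linarith : (0:ℝ) ≤ 2 - q) (hgnn x)) ht.1)]
      nlinarith [hgbd x hx, mul_nonneg hq.le (hgnn x),
        mul_nonneg (mul_nonneg (by linarith : (0:ℝ) ≤ 2 - q) (hgnn x))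
          (by linarith [ht.2] : (0:ℝ) ≤ 1 - χ ‖x‖)]
    have h3 : |2 * ‖x‖ * ‖rder d v x‖ ^ 2 * deriv χ ‖x‖| ≤ 2 * Rb * (d * C) ^ 2 * K := by
      rw [abs_mul, abs_of_nonneg (by positivity : (0:ℝ) ≤ 2 * ‖x‖ * ‖rder d v x‖ ^ 2)]
      have hK := hKb x
      have hRx := hxRb x hx
      exact mul_le_mul (mul_le_mul (mul_le_mul le_rfl hRx (norm_nonneg x)
        (by norm_num)) ha2 (sq_nonneg _) (mul_nonneg (by norm_num) hRbnn)) hK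
        (abs_nonneg _) (mul_nonneg (mul_nonneg (by norm_num) hRbnn) (sq_nonneg _))
    calc ‖f1 x‖ ≤ |2 * ‖cpd d v j x‖ ^ 2 * (1 - χ ‖x‖)|
          + |(2 - q) * gradsq d v x * χ ‖x‖|
          + |2 * ‖x‖ * ‖rder d v x‖ ^ 2 * deriv χ ‖x‖| := by
          rw [hf1def]; exact (abs_add_three _ _ _)
      _ ≤ _ := by linarith
  have hif2 : IntegrableOn f2 U volume := by
    refine Measure.integrableOn_of_bounded hUfin hm2
      (M := Rb * (d * C) * C * K) (ae_restrict_of_forall_mem hUm fun x hx => ?_)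
    rw [hf2def]
    simp only [norm_mul, Complex.norm_real, RCLike.norm_conj, Real.norm_eq_abs]
    have h1 : |x j| ≤ Rb := le_trans (coord_abs_le_norm x j) (hxRb x hx)
    have h2 := hrbd x hx
    have h3 := hbcpd j x hx
    have h4 := hKb x
    have hdC : (0:ℝ) ≤ d * C := by positivity
    exact mul_le_mul (mul_le_mul (mul_le_mul h1 h2 (norm_nonneg _)
      hRbnn) h3 (norm_nonneg _) (mul_nonneg hRbnn hdC)) h4 (abs_nonneg _)
      (mul_nonneg (mul_nonneg hRbnn hdC) hCnn)
  have hig1 : IntegrableOn g1 U volume := by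
    refine Measure.integrableOn_of_bounded hUfin hm3 (M := C ^ 2)
      (ae_restrict_of_forall_mem hUm fun x hx => ?_)
    have hb := hbcpd j x hx
    rw [hg1def, Real.norm_eq_abs, abs_of_nonneg (by positivity)]
    exact pow_le_pow_left₀ (norm_nonneg _) hb 2
  have hig2 : IntegrableOn g2 U volume := by
    refine Measure.integrableOn_of_bounded hUfin hm4 (M := d * C ^ 2)
      (ae_restrict_of_forall_mem hUm fun x hx => ?_)
    have ht := hχ01 ‖x‖ (norm_nonneg x)
    have hg := hgbd x hx
    have hgn := hgnn x
    rw [hg2def, Real.norm_eq_abs, abs_of_nonneg (mul_nonneg hgn ht.1)]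
    nlinarith [mul_nonneg hgn (by linarith [ht.2] : (0:ℝ) ≤ 1 - χ ‖x‖)]
  -- pointwise inequality
  have hpt : ∀ x ∈ U, (2 - q - μ - cchi χ / 2) * g1 x + μ * g2 x ≤ f1 x - 2 * (f2 x).re := by
    intro x _
    by_cases hx0 : x = 0
    · subst hx0
      have h0 : rder d v (0 : EuclideanSpace ℝ (Fin d)) = 0 := by simp [rder]
      have hχ0 : χ (0 : ℝ) = 0 := hχ.eq_zero 0 le_rfl hR0.le
      simp only [hf1def, hf2def, hg1def, hg2def, h0, norm_zero, hχ0, mul_zero, zero_mul,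
        mul_one, sub_zero, add_zero, zero_add, Complex.zero_re]
      nlinarith [mul_nonneg (show (0:ℝ) ≤ q + μ + cchi χ / 2 by linarith)
        (sq_nonneg ‖cpd d v j (0 : EuclideanSpace ℝ (Fin d))‖)]
    · have hr : 0 < ‖x‖ := norm_pos_iff.2 hx0
      have hp : 0 ≤ deriv χ ‖x‖ := hdnn _ hr
      have hrp : ‖x‖ * deriv χ ‖x‖ ≤ cchi χ := hcub _ hr
      have ht := hχ01 ‖x‖ (norm_nonneg x)
      have hbG := hcpd_sq_le x
      have hre : (f2 x).re ≤ ‖x‖ * ‖rder d v x‖ * ‖cpd d v j x‖ * deriv χ ‖x‖ := by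
        refine le_trans (le_abs_self _) (le_trans (Complex.abs_re_le_norm _) ?_)
        simp only [hf2def, map_mul, norm_mul, Complex.norm_real, Complex.norm_conj,
          RCLike.norm_conj, Real.norm_eq_abs]
        rw [abs_of_nonneg hp]
        exact mul_le_mul_of_nonneg_right (mul_le_mul_of_nonneg_right
          (mul_le_mul_of_nonneg_right (coord_abs_le_norm x j) (norm_nonneg _))
          (norm_nonneg _)) hp
      simp only [hf1def, hf2def, hg1def, hg2def]
      simp only [hf2def] at hre
      set a := ‖rder d v x‖
      set b := ‖cpd d v j x‖
      set G := gradsq d v x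
      set t := χ ‖x‖
      set p := deriv χ ‖x‖
      set r := ‖x‖
      nlinarith [mul_nonneg (mul_nonneg hr.le hp) (sq_nonneg (a - b / 2)),
        mul_nonneg (mul_nonneg (by linarith : (0:ℝ) ≤ 2 - q - μ) (sub_nonneg.2 hbG)) ht.1,
        mul_nonneg (mul_nonneg (by linarith : (0:ℝ) ≤ q + μ) (sq_nonneg b))
          (by linarith [ht.2] : (0:ℝ) ≤ 1 - t),
        mul_nonneg (sub_nonneg.2 hrp) (sq_nonneg b), hre]
  -- combine the integrals
  have hre_int : IntegrableOn (fun x => (f2 x).re) U volume := by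
    have := hif2.re
    simpa [RCLike.re_to_complex, IntegrableOn] using this
  have hI2 : (∫ x in U, f2 x).re = ∫ x in U, (f2 x).re := by
    have := integral_re (μ := volume.restrict U) hif2
    simpa [RCLike.re_to_complex] using this.symm
  rw [hI2]
  have hstep : ∫ x in U, ((2 - q - μ - cchi χ / 2) * g1 x + μ * g2 x)
      ≤ ∫ x in U, (f1 x - 2 * (f2 x).re) :=
    setIntegral_mono_on ((hig1.const_mul _).add (hig2.const_mul _))
      (hif1.sub (hre_int.const_mul 2)) hUm hpt
  rw [integral_add (hig1.const_mul _) (hig2.const_mul _), integral_const_mul,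
    integral_const_mul] at hstep
  rw [integral_sub hif1 (hre_int.const_mul 2), integral_const_mul] at hstep
  exact hstep


/-- Lemma 3.3 of the paper: for `χ` an admissible transition function for `(R0, R1)`,
`q, μ > 0` with `q + μ ≤ 2`, `U ⊆ ℝ^d` bounded and measurable, and `v : ℝ^d → ℂ`
continuously differentiable:
`∫_U [2|∂_d v|²(1 − χ(r)) + (2−q)|∇v|²χ(r) + 2r|∂_r v|²χ′(r)] dx`
`− 2 Re ∫_U x_d ∂_r v conj(∂_d v) χ′(r) dx`
`≥ (2 − q − μ − c_χ/2) ∫_U |∂_d v|² dx + μ ∫_U |∇v|²χ(r) dx`. -/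
theorem transition_energy_inequality (d : ℕ) (hd : 2 ≤ d) (R0 R1 : ℝ) (hR0 : 0 < R0)
    (hR01 : R0 < R1) (χ : ℝ → ℝ) (hχ : IsAdmissibleTransition R0 R1 χ)
    (q μ : ℝ) (hq : 0 < q) (hμ : 0 < μ) (hqμ : q + μ ≤ 2)
    (U : Set (EuclideanSpace ℝ (Fin d))) (hUm : MeasurableSet U)
    (hUb : Bornology.IsBounded U)
    (v : EuclideanSpace ℝ (Fin d) → ℂ) (hv : ContDiff ℝ 1 v) :
    (∫ x in U,
        (2 * ‖cpd d v ⟨d - 1, by omega⟩ x‖ ^ 2 * (1 - χ ‖x‖)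
          + (2 - q) * gradsq d v x * χ ‖x‖
          + 2 * ‖x‖ * ‖rder d v x‖ ^ 2 * deriv χ ‖x‖))
      - 2 * (∫ x in U,
          ((x ⟨d - 1, by omega⟩ : ℝ) : ℂ) * rder d v x
            * conj (cpd d v ⟨d - 1, by omega⟩ x) * ((deriv χ ‖x‖ : ℝ) : ℂ)).re
      ≥ (2 - q - μ - cchi χ / 2) * (∫ x in U, ‖cpd d v ⟨d - 1, by omega⟩ x‖ ^ 2)
        + μ * ∫ x in U, gradsq d v x * χ ‖x‖ :=
  transition_aux d R0 R1 hR0 hR01 χ hχ q μ hq hμ hqμ U hUm hUb v hv _
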